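/- arXiv:2502.20032 — 2 statements merged into one kernel-verified Lean document; each statement's English description precedes it below -/
import Mathlib

section
/- For a finite simple graph G that is connected, not complete, and not an odd cycle, the chromatic number of G is at most the maximum degree Δ(G). -/
open SimpleGraph

namespace BrooksProof

variable {V : Type*} {G : SimpleGraph V} {s t : Set V} {u v w : V}

/-- Reachability within a set of vertices. -/
def ReachIn (G : SimpleGraph V) (s : Set V) (u v : V) : Prop :=
  ∃ p : G.Walk u v, ∀ x ∈ p.support, x ∈ s

lemma ReachIn.mem_left (h : ReachIn G s u v) : u ∈ s := by
  obtain ⟨p, hp⟩ := h; exact hp _ p.start_mem_support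

lemma ReachIn.mem_right (h : ReachIn G s u v) : v ∈ s := by
  obtain ⟨p, hp⟩ := h; exact hp _ p.end_mem_support

lemma ReachIn.refl (h : v ∈ s) : ReachIn G s v v :=
  ⟨Walk.nil, by simpa using h⟩

lemma ReachIn.symm (h : ReachIn G s u v) : ReachIn G s v u := by
  obtain ⟨p, hp⟩ := h
  exact ⟨p.reverse, by intro x hx; rw [Walk.support_reverse] at hx; exact hp x (List.mem_reverse.mp hx)⟩

lemma ReachIn.trans (h : ReachIn G s u v) (h' : ReachIn G s v w) : ReachIn G s u w := by
  obtain ⟨p, hp⟩ := h; obtain ⟨q, hq⟩ := h'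
  refine ⟨p.append q, fun x hx => ?_⟩
  rcases (Walk.mem_support_append_iff _ _).mp hx with h | h
  · exact hp x h
  · exact hq x h

lemma reachIn_adj (h : G.Adj u v) (hu : u ∈ s) (hv : v ∈ s) : ReachIn G s u v := by
  refine ⟨h.toWalk, ?_⟩
  intro x hx
  simp only [Adj.toWalk, Walk.support_cons, Walk.support_nil, List.mem_cons,
    List.mem_singleton, List.not_mem_nil, or_false] at hx
  rcases hx with rfl | rfl <;> assumption

lemma ReachIn.mono (hst : s ⊆ t) (h : ReachIn G s u v) : ReachIn G t u v := by
  obtain ⟨p, hp⟩ := h; exact ⟨p, fun x hx => hst (hp x hx)⟩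

lemma ReachIn.cons (h : G.Adj u v) (hu : u ∈ s) (hr : ReachIn G s v w) : ReachIn G s u w :=
  (reachIn_adj h hu hr.mem_left).trans hr

lemma reachable_induce_of_reachIn (h : ReachIn G s u v) :
    ∀ (hu : u ∈ s) (hv : v ∈ s), (G.induce s).Reachable ⟨u, hu⟩ ⟨v, hv⟩ := by
  obtain ⟨p, hp⟩ := h
  induction p with
  | nil => intro hu hv; rfl
  | cons h q ih =>
    rename_i a b c
    intro hu hv
    have hb : b ∈ s := by
      apply hp; rw [Walk.support_cons]; exact List.mem_cons_of_mem _ q.start_mem_support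
    have : (G.induce s).Adj ⟨a, hu⟩ ⟨b, hb⟩ := by simpa using h
    exact (this.reachable).trans (ih (fun x hx => hp x (by rw [Walk.support_cons]; exact List.mem_cons_of_mem _ hx)) hb hv)

lemma reachIn_of_reachable_induce {u v : ↥s} (h : (G.induce s).Reachable u v) :
    ReachIn G s u v := by
  obtain ⟨p⟩ := h
  induction p with
  | nil => exact ReachIn.refl (Subtype.coe_prop _)
  | cons h q ih =>
    rename_i a b c
    exact ReachIn.cons (by simpa using h) (Subtype.coe_prop _) ih

lemma connected_induce_iff :
    (G.induce s).Connected ↔ s.Nonempty ∧ ∀ u ∈ s, ∀ v ∈ s, ReachIn G s u v := by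
  constructor
  · intro h
    refine ⟨⟨_, (Classical.choice h.nonempty).coe_prop⟩, fun u hu v hv => ?_⟩
    exact reachIn_of_reachable_induce (h.preconnected ⟨u, hu⟩ ⟨v, hv⟩)
  · rintro ⟨⟨x, hx⟩, h⟩
    have : Nonempty ↥s := ⟨⟨x, hx⟩⟩
    apply Connected.mk
    intro u v
    exact reachable_induce_of_reachIn (h u u.2 v v.2) u.2 v.2

/-- components within a set -/
def comp (G : SimpleGraph V) (s : Set V) (c : V) : Set V := {u | ReachIn G s c u}

lemma comp_subset : comp G s c ⊆ s := fun _ h => ReachIn.mem_right h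

lemma mem_comp_self (h : c ∈ s) : c ∈ comp G s c := ReachIn.refl h

lemma comp_closed {c : V} (hu : u ∈ comp G s c) (hadj : G.Adj u v) (hv : v ∈ s) :
    v ∈ comp G s c :=
  ReachIn.trans hu (reachIn_adj hadj (ReachIn.mem_right hu) hv)

/-- within a component, everything is reachable from the root inside the component -/
lemma reachIn_comp_aux {c : V} (q : G.Walk u v) (hq : ∀ x ∈ q.support, x ∈ s)
    (hu : u ∈ comp G s c) : ReachIn G (comp G s c) u v := by
  induction q with
  | nil => exact ReachIn.refl hu
  | cons hadj q ih =>
    rename_i x y w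
    have hy : y ∈ s := hq _ (by rw [Walk.support_cons]; exact List.mem_cons_of_mem _ q.start_mem_support)
    have hy' : y ∈ comp G s c := comp_closed hu hadj hy
    exact ReachIn.cons hadj hu
      (ih (fun t ht => hq t (by rw [Walk.support_cons]; exact List.mem_cons_of_mem _ ht)) hy')

lemma reachIn_comp_of_mem {c : V} (hu : u ∈ comp G s c) : ReachIn G (comp G s c) c u := by
  obtain ⟨p, hp⟩ := hu
  exact reachIn_comp_aux p hp (mem_comp_self (hp _ p.start_mem_support))

/-- Walking inside `s` from inside a closed set `C`, one stays in `C` until possibly hitting `z`. -/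
lemma stay_lemma {C : Set V} {z : V}
    (hcl : ∀ p ∈ C, ∀ q, G.Adj p q → q ∈ s → q ∈ C ∪ {z})
    (hu : u ∈ C) (p : G.Walk u v) (hp : ∀ x ∈ p.support, x ∈ s) :
    ReachIn G (C ∪ {z}) u z ∨ ReachIn G C u v := by
  induction p with
  | nil => exact Or.inr (ReachIn.refl hu)
  | cons hadj q ih =>
    rename_i x y w
    have hy : y ∈ s := hp _ (by rw [Walk.support_cons]; exact List.mem_cons_of_mem _ q.start_mem_support)
    rcases hcl x hu y hadj hy with hyC | hyz
    · rcases ih hyC (fun t ht => hp t (by rw [Walk.support_cons]; exact List.mem_cons_of_mem _ ht)) with h | h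
      · exact Or.inl (ReachIn.cons hadj (Or.inl hu) h)
      · exact Or.inr (ReachIn.cons hadj hu h)
    · rcases hyz with rfl
      exact Or.inl (reachIn_adj hadj (Or.inl hu) (Or.inr rfl))

/-- Leaving a component of `s \ {z}` while staying in `s`, one must pass through `z`:
reaching `z` can be done avoiding the component. -/
lemma out_lemma {z c : V} (hz : z ∈ s) (hu : u ∈ s) (hunc : u ∉ comp G (s \ {z}) c)
    (p : G.Walk u z) (hp : ∀ x ∈ p.support, x ∈ s) :
    ReachIn G (s \ comp G (s \ {z}) c) u z := by
  have hznc : z ∉ comp G (s \ {z}) c := fun hmem => (comp_subset hmem).2 rfl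
  by_cases huz : u = z
  · subst huz; exact ReachIn.refl ⟨hu, hznc⟩
  · have hstay := stay_lemma (C := (s \ comp G (s \ {z}) c) \ {z}) (z := z) (s := s)
      (fun a ha b hab hb => ?_) ⟨⟨hu, hunc⟩, huz⟩ p hp
    · rcases hstay with h | h
      · refine h.mono ?_
        rintro x (⟨hx, -⟩ | rfl)
        exacts [hx, ⟨hz, hznc⟩]
      · exact h.mono fun x hx => hx.1
    · by_cases hbz : b = z
      · exact Or.inr hbz
      · left
        refine ⟨⟨hb, fun hbc => ?_⟩, hbz⟩
        exact ha.1.2 (comp_closed hbc hab.symm ⟨ha.1.1, fun h => ha.2 h⟩)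


section Greedy
open Finset

variable {V : Type*} [Fintype V] [DecidableEq V] (G : SimpleGraph V) [DecidableRel G.Adj]

/-- the earlier neighbors of `v` wrt an order -/
def earlier (ord : V → ℕ) (v : V) : Finset V :=
  (G.neighborFinset v).filter (fun u => ord u < ord v)

/-- Greedy coloring with a precolored initial segment `P` (colored by `C₀`). -/
noncomputable def greedy (k : ℕ) (hk : 0 < k) (ord : V → ℕ) (P : Finset V) (C₀ : V → Fin k) :
    V → Fin k := fun v =>
  if v ∈ P then C₀ v
  else
    let used : Finset (Fin k) :=
      (earlier G ord v).attach.image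
        (fun u => greedy k hk ord P C₀ u.1)
    if h : (usedᶜ).Nonempty then h.choose else ⟨0, hk⟩
termination_by v => ord v
decreasing_by
  have := u.2
  simp only [earlier, mem_filter] at this
  exact this.2

lemma greedy_mem_P (k : ℕ) (hk : 0 < k) (ord : V → ℕ) (P : Finset V) (C₀ : V → Fin k)
    {v : V} (hv : v ∈ P) : greedy G k hk ord P C₀ v = C₀ v := by
  rw [greedy, if_pos hv]

lemma greedy_not_mem_used (k : ℕ) (hk : 0 < k) (ord : V → ℕ) (P : Finset V) (C₀ : V → Fin k)
    {v : V} (hv : v ∉ P)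
    (hcard : ((earlier G ord v).image (greedy G k hk ord P C₀)).card < k) :
    greedy G k hk ord P C₀ v ∉ (earlier G ord v).image (greedy G k hk ord P C₀) := by
  have himg : (earlier G ord v).attach.image (fun u => greedy G k hk ord P C₀ u.1)
      = (earlier G ord v).image (greedy G k hk ord P C₀) := by
    ext c; simp
  rw [greedy, if_neg hv]
  simp only [himg]
  have hne : (((earlier G ord v).image (greedy G k hk ord P C₀))ᶜ).Nonempty := by
    rw [← Finset.card_pos, Finset.card_compl, Fintype.card_fin]
    omega
  rw [dif_pos hne]
  have := hne.choose_spec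
  rwa [Finset.mem_compl] at this

theorem greedy_proper (k : ℕ) (hk : 0 < k) (ord : V → ℕ) (P : Finset V) (C₀ : V → Fin k)
    (hinj : Function.Injective ord)
    (hP : ∀ a ∈ P, ∀ b ∈ P, G.Adj a b → C₀ a ≠ C₀ b)
    (hseg : ∀ a ∈ P, ∀ v, v ∉ P → ord a < ord v)
    (hcount : ∀ v, v ∉ P → (earlier G ord v).card < k ∨
      (∃ a ∈ P, ∃ b ∈ P, a ∈ earlier G ord v ∧ b ∈ earlier G ord v ∧ a ≠ b ∧ C₀ a = C₀ b ∧
        (earlier G ord v).card ≤ k)) :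
    ∀ u v, G.Adj u v → greedy G k hk ord P C₀ u ≠ greedy G k hk ord P C₀ v := by
  set C := greedy G k hk ord P C₀ with hC
  have claim : ∀ u v, G.Adj u v → ord u < ord v → C u ≠ C v := by
    intro u v hadj hlt
    by_cases hv : v ∈ P
    · have hu : u ∈ P := by
        by_contra hu
        exact absurd (hseg v hv u hu) (by omega)
      rw [hC, greedy_mem_P G k hk ord P C₀ hu, greedy_mem_P G k hk ord P C₀ hv]
      exact hP u hu v hv hadj
    · have humem : u ∈ earlier G ord v := by
        simp only [earlier, mem_filter, mem_neighborFinset]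
        exact ⟨hadj.symm, hlt⟩
      have hcardlt : ((earlier G ord v).image C).card < k := by
        rcases hcount v hv with h | h
        · exact lt_of_le_of_lt Finset.card_image_le h
        · obtain ⟨a, ha, b, hb, haE, hbE, hab, hC0, hle⟩ := h
          have hCab : C a = C b := by
            rw [hC, greedy_mem_P G k hk ord P C₀ ha, greedy_mem_P G k hk ord P C₀ hb]
            exact hC0
          have hsplit : earlier G ord v = insert b ((earlier G ord v).erase b) :=
            (Finset.insert_erase hbE).symm
          have himg2 : (earlier G ord v).image C = ((earlier G ord v).erase b).image C := by
            conv_lhs => rw [hsplit]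
            rw [Finset.image_insert]
            apply Finset.insert_eq_self.mpr
            rw [← hCab]
            exact Finset.mem_image_of_mem C (Finset.mem_erase.mpr ⟨hab, haE⟩)
          rw [himg2]
          have h1 : (((earlier G ord v).erase b).image C).card ≤ ((earlier G ord v).erase b).card :=
            Finset.card_image_le
          have h2 : ((earlier G ord v).erase b).card = (earlier G ord v).card - 1 :=
            Finset.card_erase_of_mem hbE
          have hpos : 0 < (earlier G ord v).card := Finset.card_pos.mpr ⟨b, hbE⟩
          omega
      have hnot : C v ∉ (earlier G ord v).image C :=
        greedy_not_mem_used G k hk ord P C₀ hv hcardlt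
      intro heq
      exact hnot (heq ▸ Finset.mem_image_of_mem C humem)
  intro u v hadj
  rcases lt_or_gt_of_ne (fun h => hadj.ne (hinj h)) with h | h
  · exact claim u v hadj h
  · exact (claim v u hadj.symm h).symm

end Greedy


section Ord

variable {W : Type*} [Fintype W] {H : SimpleGraph W}

lemma exists_good_ord (hH : H.Connected) (r : W) :
    ∃ ord : W → ℕ, Function.Injective ord ∧ ∀ v, v ≠ r → ∃ w, H.Adj v w ∧ ord v < ord w := by
  classical
  have hne : Nonempty W := ⟨r⟩
  have hNpos : 0 < Fintype.card W := Fintype.card_pos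
  set N := Fintype.card W with hN
  set e := Fintype.equivFin W with he
  set D := Finset.univ.sup (fun v => H.dist v r) with hD
  have mod_eq : ∀ w : W, ((D - H.dist w r) * N + (e w : ℕ)) % N = (e w : ℕ) := by
    intro w
    rw [Nat.add_comm, Nat.add_mul_mod_self_right]
    exact Nat.mod_eq_of_lt (e w).isLt
  refine ⟨fun v => (D - H.dist v r) * N + (e v : ℕ), ?_, ?_⟩
  · intro u v huv
    simp only at huv
    have h1 : ((D - H.dist u r) * N + (e u : ℕ)) % N
        = ((D - H.dist v r) * N + (e v : ℕ)) % N := by rw [huv]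
    rw [mod_eq, mod_eq] at h1
    exact e.injective (Fin.ext h1)
  · intro v hv
    have hdpos : 0 < H.dist v r := hH.pos_dist_of_ne hv
    obtain ⟨p, hp⟩ := hH.exists_walk_length_eq_dist v r
    cases p with
    | nil => rw [Walk.length_nil] at hp; omega
    | cons hadj q =>
      rename_i y
      refine ⟨y, hadj, ?_⟩
      have h1 : H.dist y r ≤ q.length := dist_le q
      have h2 : q.length + 1 = H.dist v r := by simpa [Walk.length_cons] using hp
      have hdvD : H.dist v r ≤ D := Finset.le_sup (f := fun v => H.dist v r) (Finset.mem_univ v)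
      have hBA : (D - H.dist v r) + 1 ≤ D - H.dist y r := by omega
      have hmul : ((D - H.dist v r) + 1) * N ≤ (D - H.dist y r) * N :=
        Nat.mul_le_mul_right N hBA
      rw [Nat.succ_mul] at hmul
      have hev : (e v : ℕ) < N := (e v).isLt
      simp only
      omega

end Ord

section LemC

open Finset

theorem colorable_of_exists_lt_degree {W : Type*} [Fintype W] (H : SimpleGraph W)
    [DecidableRel H.Adj] (hH : H.Connected) (k : ℕ) (hdeg : ∀ v, H.degree v ≤ k)
    (r : W) (hr : H.degree r < k) : H.Colorable k := by
  classical
  have hk : 0 < k := by omega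
  obtain ⟨ord, hinj, hord⟩ := exists_good_ord hH r
  refine ⟨Coloring.mk (greedy H k hk ord ∅ (fun _ => ⟨0, hk⟩)) ?_⟩
  intro u v hadj
  refine greedy_proper H k hk ord ∅ (fun _ => ⟨0, hk⟩) hinj (by simp) (by simp) ?_ u v hadj
  intro v _
  left
  by_cases hvr : v = r
  · subst hvr
    calc (earlier H ord v).card ≤ (H.neighborFinset v).card :=
          Finset.card_le_card (Finset.filter_subset _ _)
      _ < k := hr
  · obtain ⟨w, hw, hlt⟩ := hord v hvr
    have hsub : earlier H ord v ⊆ (H.neighborFinset v).erase w := by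
      intro x hx
      simp only [earlier, mem_filter, mem_neighborFinset] at hx
      refine Finset.mem_erase.mpr ⟨?_, (mem_neighborFinset H v x).mpr hx.1⟩
      rintro rfl
      omega
    have h1 : (earlier H ord v).card ≤ ((H.neighborFinset v).erase w).card :=
      Finset.card_le_card hsub
    have h2 : ((H.neighborFinset v).erase w).card = H.degree v - 1 :=
      Finset.card_erase_of_mem ((mem_neighborFinset H v w).mpr hw)
    have h3 : 1 ≤ H.degree v := by
      rw [← card_neighborFinset_eq_degree]
      exact Finset.card_pos.mpr ⟨w, (mem_neighborFinset H v w).mpr hw⟩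
    have h4 := hdeg v
    omega

end LemC


section Glue

open Finset

variable {V : Type*} [Fintype V] {G : SimpleGraph V}

/-- last-edge extraction -/
lemma exists_penultimate {X : Set V} {c w : V} (h : ReachIn G X c w) (hcw : c ≠ w) :
    ∃ t, G.Adj t w ∧ t ∈ X ∧ t ≠ w := by
  obtain ⟨p, hp⟩ := h.symm
  cases p with
  | nil => exact absurd rfl hcw.symm
  | cons hadj q =>
    rename_i y
    refine ⟨y, hadj.symm, ?_, hadj.ne'⟩
    exact hp _ (by rw [Walk.support_cons]; exact List.mem_cons_of_mem _ q.start_mem_support)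

lemma degree_induce_le [DecidableRel G.Adj] {s : Set V} [Fintype ↥s]
    [DecidableRel (G.induce s).Adj] (v : ↥s) : (G.induce s).degree v ≤ G.degree v := by
  classical
  rw [← card_neighborFinset_eq_degree, ← card_neighborFinset_eq_degree]
  have hsub : ((G.induce s).neighborFinset v).map ⟨Subtype.val, Subtype.val_injective⟩
      ⊆ G.neighborFinset (v : V) := by
    intro x hx
    rw [Finset.mem_map] at hx
    obtain ⟨u, hu, rfl⟩ := hx
    rw [mem_neighborFinset] at hu
    rw [Function.Embedding.coeFn_mk, mem_neighborFinset]
    exact hu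
  have := Finset.card_le_card hsub
  rwa [Finset.card_map] at this

lemma degree_induce_lt [DecidableRel G.Adj] {s : Set V} [Fintype ↥s]
    [DecidableRel (G.induce s).Adj] (v : ↥s) {t : V} (ht : G.Adj v t) (hts : t ∉ s) :
    (G.induce s).degree v < G.degree v := by
  classical
  rw [← card_neighborFinset_eq_degree, ← card_neighborFinset_eq_degree]
  have hsub : ((G.induce s).neighborFinset v).map ⟨Subtype.val, Subtype.val_injective⟩
      ⊆ (G.neighborFinset (v : V)).erase t := by
    intro x hx
    rw [Finset.mem_map] at hx
    obtain ⟨u, hu, rfl⟩ := hx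
    rw [mem_neighborFinset] at hu
    rw [Function.Embedding.coeFn_mk]
    refine Finset.mem_erase.mpr ⟨?_, (mem_neighborFinset G v u).mpr hu⟩
    rintro rfl
    exact hts u.2
  have h2 := Finset.card_le_card hsub
  rw [Finset.card_map] at h2
  have h3 : ((G.neighborFinset (v : V)).erase t).card = (G.neighborFinset (v : V)).card - 1 :=
    Finset.card_erase_of_mem ((mem_neighborFinset G v t).mpr ht)
  have h4 : 0 < (G.neighborFinset (v : V)).card :=
    Finset.card_pos.mpr ⟨t, (mem_neighborFinset G v t).mpr ht⟩
  omega

theorem colorable_of_cutvertex [DecidableRel G.Adj] (hconn : G.Connected) (k : ℕ)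
    (hdeg : ∀ v, G.degree v ≤ k) (w : V) {u1 u2 : V} (h1w : u1 ≠ w) (h2w : u2 ≠ w)
    (hcut : ¬ ReachIn G {x | x ≠ w} u1 u2) : G.Colorable k := by
  classical
  set s : Set V := {x | x ≠ w} with hs
  -- k is positive
  have hk : 0 < k := by
    have hd : 0 < G.dist w u1 := hconn.pos_dist_of_ne (Ne.symm h1w)
    obtain ⟨p, hp⟩ := hconn.exists_walk_length_eq_dist w u1
    have hdegw : 1 ≤ G.degree w := by
      cases p with
      | nil => rw [Walk.length_nil] at hp; omega
      | cons hadj q =>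
        rw [← card_neighborFinset_eq_degree]
        exact Finset.card_pos.mpr ⟨_, (mem_neighborFinset G w _).mpr hadj⟩
    exact lt_of_lt_of_le hdegw (hdeg w)
  -- reach w from within branch
  have branch_reach : ∀ v : V, v ≠ w → ReachIn G (comp G s v ∪ {w}) v w := by
    intro v hv
    obtain ⟨p⟩ := hconn.preconnected v w
    have hstay := stay_lemma (C := comp G s v) (z := w) (s := Set.univ)
      (fun a ha b hab _ => ?_) (mem_comp_self (show v ∈ s from hv)) p (fun x _ => Set.mem_univ x)
    · rcases hstay with h | h
      · exact h
      · exact h.mono Set.subset_union_left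
    · by_cases hbw : b = w
      · exact Or.inr hbw
      · exact Or.inl (comp_closed ha hab hbw)
  -- each branch reaches w internally from any point
  have branch_reach' : ∀ v : V, v ≠ w → ∀ u ∈ comp G s v ∪ {w},
      ReachIn G (comp G s v ∪ {w}) u w := by
    intro v hv u hu
    rcases hu with hu | hu
    · exact ((reachIn_comp_of_mem hu).mono Set.subset_union_left).symm.trans (branch_reach v hv)
    · rw [Set.mem_singleton_iff] at hu
      subst hu
      exact ReachIn.refl (Or.inr rfl)
  -- branch colorings exist
  have hex : ∀ v : V, v ≠ w → ∃ f : V → Fin k,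
      (∀ a ∈ comp G s v ∪ {w}, ∀ b ∈ comp G s v ∪ {w}, G.Adj a b → f a ≠ f b)
        ∧ f w = ⟨0, hk⟩ := by
    intro v hv
    set B : Set V := comp G s v ∪ {w} with hB
    have hwB : w ∈ B := Or.inr rfl
    have hvB : v ∈ B := Or.inl (mem_comp_self (show v ∈ s from hv))
    -- the branch is connected
    have hBconn : (G.induce B).Connected := by
      rw [connected_induce_iff]
      refine ⟨⟨w, hwB⟩, fun a ha b hb => ?_⟩
      exact (branch_reach' v hv a ha).trans (branch_reach' v hv b hb).symm
    -- w has an external neighbor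
    have hext : ∃ t, G.Adj w t ∧ t ∉ B := by
      have hone : u1 ∉ comp G s v ∨ u2 ∉ comp G s v := by
        by_contra hcon
        push_neg at hcon
        exact hcut ((hcon.1).symm.trans hcon.2)
      obtain ⟨c, hcw, hcnot⟩ : ∃ c : V, c ≠ w ∧ c ∉ comp G s v := by
        rcases hone with h | h
        exacts [⟨u1, h1w, h⟩, ⟨u2, h2w, h⟩]
      obtain ⟨t, htadj, htmem, htw⟩ := exists_penultimate (branch_reach c hcw) hcw
      refine ⟨t, htadj.symm, ?_⟩
      rintro (htv | htv)
      · rcases htmem with htc | htc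
        · exact hcnot (ReachIn.trans htv (ReachIn.symm htc))
        · exact htw htc
      · exact htw htv
    obtain ⟨t, htadj, htB⟩ := hext
    -- color the branch
    have hcol : (G.induce B).Colorable k := by
      refine colorable_of_exists_lt_degree (G.induce B) hBconn k (fun u => ?_) ⟨w, hwB⟩ ?_
      · exact le_trans (degree_induce_le u) (hdeg u)
      · exact lt_of_lt_of_le (degree_induce_lt ⟨w, hwB⟩ htadj htB) (hdeg w)
    obtain ⟨C⟩ := hcol
    set σ := Equiv.swap (C ⟨w, hwB⟩) ⟨0, hk⟩ with hσ
    refine ⟨fun u => if h : u ∈ B then σ (C ⟨u, h⟩) else ⟨0, hk⟩, ?_, ?_⟩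
    · intro a ha b hb hab
      dsimp only
      rw [dif_pos ha, dif_pos hb]
      intro heq
      exact C.valid (show (G.induce B).Adj ⟨a, ha⟩ ⟨b, hb⟩ from hab) (σ.injective heq)
    · dsimp only
      rw [dif_pos hwB]
      exact Equiv.swap_apply_left _ _
  -- choice of branch coloring, as a function of the branch set
  set pick : Set V → (V → Fin k) := fun B =>
    if h : ∃ f : V → Fin k, (∀ a ∈ B, ∀ b ∈ B, G.Adj a b → f a ≠ f b) ∧ f w = ⟨0, hk⟩
    then h.choose else fun _ => ⟨0, hk⟩ with hpick
  have pick_spec : ∀ v : V, v ≠ w →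
      (∀ a ∈ comp G s v ∪ {w}, ∀ b ∈ comp G s v ∪ {w}, G.Adj a b →
        pick (comp G s v ∪ {w}) a ≠ pick (comp G s v ∪ {w}) b)
      ∧ pick (comp G s v ∪ {w}) w = ⟨0, hk⟩ := by
    intro v hv
    have h := hex v hv
    rw [hpick]
    simp only [dif_pos h]
    exact h.choose_spec
  -- the global coloring
  refine ⟨Coloring.mk (fun v => if h : v = w then ⟨0, hk⟩ else pick (comp G s v ∪ {w}) v) ?_⟩
  intro p q hpq
  by_cases hpw : p = w
  · have hqw : q ≠ w := by
      intro h
      exact hpq.ne (by rw [hpw, h])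
    rw [dif_pos hpw, dif_neg hqw]
    have hspec := pick_spec q hqw
    have hqB : q ∈ comp G s q ∪ {w} := Or.inl (mem_comp_self hqw)
    have h2 := hspec.1 q hqB w (Or.inr rfl) (by rw [← hpw]; exact hpq.symm)
    rw [hspec.2] at h2
    exact h2.symm
  · by_cases hqw : q = w
    · rw [dif_neg hpw, dif_pos hqw]
      have hspec := pick_spec p hpw
      have hpB : p ∈ comp G s p ∪ {w} := Or.inl (mem_comp_self hpw)
      have h2 := hspec.1 p hpB w (Or.inr rfl) (by rw [← hqw]; exact hpq)
      rw [hspec.2] at h2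
      exact h2
    · rw [dif_neg hpw, dif_neg hqw]
      have hsame : comp G s p = comp G s q := by
        have hr : ReachIn G s p q := reachIn_adj hpq hpw hqw
        ext x
        exact ⟨fun h => hr.symm.trans h, fun h => hr.trans h⟩
      rw [← hsame]
      have hspec := pick_spec p hpw
      exact hspec.1 p (Or.inl (mem_comp_self hpw)) q
        (hsame ▸ Or.inl (mem_comp_self hqw)) hpq

end Glue


section Triple

open Finset

variable {V : Type*} [Fintype V] {G : SimpleGraph V}

theorem exists_triple [DecidableRel G.Adj] (hconn : G.Connected)
    (hdeg3 : ∀ v, 3 ≤ G.degree v)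
    {x y0 : V} (hxy0 : x ≠ y0) (hnadj0 : ¬ G.Adj x y0)
    (hnocut : ∀ w u t : V, u ≠ w → t ≠ w → ReachIn G {z | z ≠ w} u t) :
    ∃ v a b : V, G.Adj v a ∧ G.Adj v b ∧ ¬ G.Adj a b ∧ a ≠ b ∧
      ∀ u t : V, u ≠ a → u ≠ b → t ≠ a → t ≠ b →
        ReachIn G {p | p ≠ a ∧ p ≠ b} u t := by
  classical
  set H : Set V := {p | p ≠ x} with hH
  -- a vertex at distance two
  obtain ⟨v, b0, hxv, hvb0, hxb0, hb0x⟩ :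
      ∃ v b0 : V, G.Adj x v ∧ G.Adj v b0 ∧ ¬ G.Adj x b0 ∧ b0 ≠ x := by
    have hd2 : 2 ≤ G.dist x y0 := by
      have h0 : G.dist x y0 ≠ 0 := fun h => hxy0 (hconn.dist_eq_zero_iff.mp h)
      have h1 : G.dist x y0 ≠ 1 := fun h => hnadj0 (dist_eq_one_iff_adj.mp h)
      omega
    obtain ⟨p, hp⟩ := hconn.exists_walk_length_eq_dist x y0
    cases p with
    | nil => rw [Walk.length_nil] at hp; omega
    | cons h1 q =>
      cases q with
      | nil => rw [Walk.length_cons, Walk.length_nil] at hp; omega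
      | cons h2 r =>
        rename_i v b0
        rw [Walk.length_cons, Walk.length_cons] at hp
        refine ⟨v, b0, h1, h2, ?_, ?_⟩
        · intro hadj
          have := dist_le (Walk.cons hadj r)
          rw [Walk.length_cons] at this
          omega
        · rintro rfl
          have := dist_le r
          omega
  by_cases hcase : ∀ z, z ≠ x → ∀ u t : V, u ∈ H \ {z} → t ∈ H \ {z} →
      ReachIn G (H \ {z}) u t
  · -- G - x is 2-connected: use (v, x, b0)
    refine ⟨v, x, b0, hxv.symm, hvb0, hxb0, Ne.symm hb0x, ?_⟩
    intro u t hua hub hta htb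
    have hset : {p : V | p ≠ x ∧ p ≠ b0} = H \ {b0} := by
      ext p
      simp [hH, Set.mem_diff]
    rw [hset]
    exact hcase b0 hb0x u t ⟨hua, hub⟩ ⟨hta, htb⟩
  · push_neg at hcase
    obtain ⟨z0, hz0x, u0, t0, hu0, ht0, hnr0⟩ := hcase
    -- family of (cutvertex, component-root) pairs
    set Fam : V × V → Prop := fun zc =>
      zc.1 ≠ x ∧ zc.2 ∈ H \ {zc.1} ∧
        ∃ t, t ∈ H \ {zc.1} ∧ ¬ ReachIn G (H \ {zc.1}) zc.2 t with hFam
    have hFdec : DecidablePred Fam := fun _ => Classical.dec _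
    have hne1 : (Finset.univ.filter Fam).Nonempty := by
      refine ⟨(z0, u0), Finset.mem_filter.mpr ⟨Finset.mem_univ _, ?_⟩⟩
      exact ⟨hz0x, hu0, t0, ht0, hnr0⟩
    obtain ⟨p1, hp1mem, hp1min⟩ := Finset.exists_min_image (Finset.univ.filter Fam)
      (fun zc => (comp G (H \ {zc.1}) zc.2).ncard) hne1
    obtain ⟨z1, c1⟩ := p1
    rw [Finset.mem_filter] at hp1mem
    obtain ⟨-, hz1x, hc1mem, t1, ht1mem, hnr1⟩ := hp1mem
    set C1 : Set V := comp G (H \ {z1}) c1 with hC1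
    have hmin1 : ∀ z c : V, z ≠ x → c ∈ H \ {z} →
        (∃ t, t ∈ H \ {z} ∧ ¬ ReachIn G (H \ {z}) c t) →
        C1.ncard ≤ (comp G (H \ {z}) c).ncard := by
      intro z c h1 h2 h3
      exact hp1min (z, c) (Finset.mem_filter.mpr ⟨Finset.mem_univ _, h1, h2, h3⟩)
    have hc1C1 : c1 ∈ C1 := mem_comp_self hc1mem
    have hz1nC1 : z1 ∉ C1 := fun h => (comp_subset h).2 rfl
    have hC1H : C1 ⊆ H \ {z1} := comp_subset
    -- second family, avoiding C1 ∪ {z1}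
    set Fam2 : V × V → Prop := fun zc =>
      Fam zc ∧ (comp G (H \ {zc.1}) zc.2) ∩ (C1 ∪ {z1}) = ∅ with hFam2
    have hne2 : (Finset.univ.filter Fam2).Nonempty := by
      refine ⟨(z1, t1), Finset.mem_filter.mpr ⟨Finset.mem_univ _, ⟨hz1x, ht1mem, c1, hc1mem,
        fun h => hnr1 h.symm⟩, ?_⟩⟩
      apply Set.eq_empty_iff_forall_notMem.mpr
      rintro y ⟨hy1, hy2⟩
      rcases hy2 with hy2 | hy2
      · exact hnr1 ((hy2 : ReachIn G _ c1 y).trans (hy1 : ReachIn G _ t1 y).symm)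
      · rw [Set.mem_singleton_iff] at hy2
        subst hy2
        exact (comp_subset hy1).2 rfl
    obtain ⟨p2, hp2mem, hp2min⟩ := Finset.exists_min_image (Finset.univ.filter Fam2)
      (fun zc => (comp G (H \ {zc.1}) zc.2).ncard) hne2
    obtain ⟨z2, c2⟩ := p2
    rw [Finset.mem_filter] at hp2mem
    obtain ⟨-, ⟨hz2x, hc2mem, t2, ht2mem, hnr2⟩, hdisj⟩ := hp2mem
    set C2 : Set V := comp G (H \ {z2}) c2 with hC2
    have hmin2 : ∀ z c : V, z ≠ x → c ∈ H \ {z} →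
        (∃ t, t ∈ H \ {z} ∧ ¬ ReachIn G (H \ {z}) c t) →
        (comp G (H \ {z}) c) ∩ (C1 ∪ {z1}) = ∅ →
        C2.ncard ≤ (comp G (H \ {z}) c).ncard := by
      intro z c h1 h2 h3 h4
      exact hp2min (z, c) (Finset.mem_filter.mpr ⟨Finset.mem_univ _, ⟨h1, h2, h3⟩, h4⟩)
    have hc2C2 : c2 ∈ C2 := mem_comp_self hc2mem
    have hz2nC2 : z2 ∉ C2 := fun h => (comp_subset h).2 rfl
    have hC2H : C2 ⊆ H \ {z2} := comp_subset
    have hdisj' : ∀ y, y ∈ C2 → y ∉ C1 ∧ y ≠ z1 := by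
      intro y hy
      constructor
      · intro hy1
        exact Set.eq_empty_iff_forall_notMem.mp hdisj y ⟨hy, Or.inl hy1⟩
      · intro hy1
        exact Set.eq_empty_iff_forall_notMem.mp hdisj y ⟨hy, Or.inr hy1⟩
    have hz1H : z1 ∈ H := hz1x
    have hz2H : z2 ∈ H := hz2x
    -- K1-connectivity: everything outside C1 reaches z1 avoiding C1
    have hK1 : ∀ u, u ≠ x → u ∉ C1 → ReachIn G (H \ C1) u z1 := by
      intro u hux hunc
      obtain ⟨p, hp⟩ := hnocut x u z1 hux hz1x
      exact out_lemma hz1H hux hunc p hp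
    have hK2 : ∀ u, u ≠ x → u ∉ C2 → ReachIn G (H \ C2) u z2 := by
      intro u hux hunc
      obtain ⟨p, hp⟩ := hnocut x u z2 hux hz2x
      exact out_lemma hz2H hux hunc p hp
    -- z2 is not in C1
    have hz2nC1 : z2 ∉ C1 := by
      intro hz2C1
      have hc2r : ReachIn G (H \ C1) c2 z1 :=
        hK1 c2 (hc2mem.1) (fun h => (hdisj' c2 hc2C2).1 h)
      have hmono : ReachIn G (H \ {z2}) c2 z1 := by
        refine hc2r.mono ?_
        rintro p ⟨hp1, hp2⟩
        refine ⟨hp1, ?_⟩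
        rintro rfl
        exact hp2 hz2C1
      exact (hdisj' z1 hmono).2 rfl
    -- membership helpers
    have hmk : ∀ {p z : V}, p ≠ x → p ≠ z → p ∈ H \ {z} := by
      intro p z h1 h2
      exact ⟨h1, by simp [h2]⟩
    have hget : ∀ {p z : V}, p ∈ H \ {z} → p ≠ x ∧ p ≠ z := by
      intro p z h
      simpa [hH, Set.mem_diff] using h
    -- no vertex of C1 is a cutvertex of H
    have hAnc : ∀ a', a' ∈ C1 → ∀ u, u ∈ H \ {a'} → ReachIn G (H \ {a'}) u z1 := by
      intro a' ha'
      by_contra hcon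
      push_neg at hcon
      obtain ⟨u0', hu0', hnr'⟩ := hcon
      have ha'xz := hget (hC1H ha')
      have hz1mem : z1 ∈ H \ {a'} := hmk hz1x (fun h => hz1nC1 (h ▸ ha'))
      have hsub : comp G (H \ {a'}) u0' ⊆ C1 \ {a'} := by
        intro y hy
        have hy' := hget (comp_subset hy)
        by_cases hynC1 : y ∈ C1
        · exact ⟨hynC1, by simp [hy'.2]⟩
        · exfalso
          have hr := hK1 y hy'.1 hynC1
          have hr' : ReachIn G (H \ {a'}) y z1 := by
            refine hr.mono ?_
            rintro q ⟨hq1, hq2⟩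
            exact hmk hq1 (fun h => hq2 (h ▸ ha'))
          exact hnr' ((hy : ReachIn G _ u0' y).trans hr')
      have hss : comp G (H \ {a'}) u0' ⊂ C1 := by
        refine ssubset_of_subset_of_ne (hsub.trans Set.diff_subset) ?_
        intro he
        have hmem : a' ∈ comp G (H \ {a'}) u0' := he ▸ ha'
        exact (hget (comp_subset hmem)).2 rfl
      have hlt := Set.ncard_lt_ncard hss (Set.toFinite C1)
      have hge := hmin1 a' u0' ha'xz.1 hu0' ⟨z1, hz1mem, hnr'⟩
      omega
    -- no vertex of C2 is a cutvertex of H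
    have hBnc : ∀ b', b' ∈ C2 → ∀ u, u ∈ H \ {b'} → ReachIn G (H \ {b'}) u z2 := by
      intro b' hb'
      by_contra hcon
      push_neg at hcon
      obtain ⟨u0', hu0', hnr'⟩ := hcon
      have hb'xz := hget (hC2H hb')
      have hz2mem : z2 ∈ H \ {b'} := hmk hz2x (fun h => hz2nC2 (h ▸ hb'))
      have hsub : comp G (H \ {b'}) u0' ⊆ C2 \ {b'} := by
        intro y hy
        have hy' := hget (comp_subset hy)
        by_cases hynC2 : y ∈ C2
        · exact ⟨hynC2, by simp [hy'.2]⟩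
        · exfalso
          have hr := hK2 y hy'.1 hynC2
          have hr' : ReachIn G (H \ {b'}) y z2 := by
            refine hr.mono ?_
            rintro q ⟨hq1, hq2⟩
            exact hmk hq1 (fun h => hq2 (h ▸ hb'))
          exact hnr' ((hy : ReachIn G _ u0' y).trans hr')
      have hss : comp G (H \ {b'}) u0' ⊂ C2 := by
        refine ssubset_of_subset_of_ne (hsub.trans Set.diff_subset) ?_
        intro he
        have hmem : b' ∈ comp G (H \ {b'}) u0' := he ▸ hb'
        exact (hget (comp_subset hmem)).2 rfl
      have hlt := Set.ncard_lt_ncard hss (Set.toFinite C2)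
      have hdisj2 : comp G (H \ {b'}) u0' ∩ (C1 ∪ {z1}) = ∅ := by
        apply Set.eq_empty_iff_forall_notMem.mpr
        rintro y ⟨hy1, hy2⟩
        have hyC2 : y ∈ C2 := (hsub hy1).1
        rcases hy2 with hy2 | hy2
        · exact (hdisj' y hyC2).1 hy2
        · exact (hdisj' y hyC2).2 hy2
      have hge := hmin2 b' u0' hb'xz.1 hu0' ⟨z2, hz2mem, hnr'⟩ hdisj2
      omega
    -- x has a neighbor in each of C1, C2
    have hxnbr : ∀ z c : V, z ≠ x → c ∈ H \ {z} → ∃ a ∈ comp G (H \ {z}) c, G.Adj x a := by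
      intro z c hzx hc
      have hcx : c ≠ x := (hget hc).1
      have hxz : x ≠ z := Ne.symm hzx
      obtain ⟨p, hp⟩ := hnocut z c x (hget hc).2 hxz
      have hstay := stay_lemma (C := comp G (H \ {z}) c) (z := x) (s := {p | p ≠ z})
        (fun r hr q hrq hq => ?_) (mem_comp_self hc) p hp
      · rcases hstay with h | h
        · obtain ⟨t, htadj, htmem, htx⟩ := exists_penultimate h hcx
          rcases htmem with htm | htm
          · exact ⟨t, htm, htadj.symm⟩
          · exact absurd htm htx
        · exact absurd rfl (hget (comp_subset h.mem_right)).1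
      · by_cases hbx : q = x
        · exact Or.inr hbx
        · exact Or.inl (comp_closed hr hrq (hmk hbx hq))
    obtain ⟨a, haC1, hxa⟩ := hxnbr z1 c1 hz1x hc1mem
    obtain ⟨b, hbC2, hxb⟩ := hxnbr z2 c2 hz2x hc2mem
    have haH := hget (hC1H haC1)
    have hbH := hget (hC2H hbC2)
    have hbnC1 : b ∉ C1 := (hdisj' b hbC2).1
    have hbz1 : b ≠ z1 := (hdisj' b hbC2).2
    have hanC2 : a ∉ C2 := fun h => (hdisj' a h).1 haC1
    have hnab : ¬ G.Adj a b := by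
      intro hab
      exact hbnC1 (comp_closed haC1 hab (hmk hbH.1 hbz1))
    have habne : a ≠ b := fun h => hbnC1 (h ▸ haC1)
    -- the middle region M
    set M : Set V := (H \ C1) \ C2 with hM
    have hz1M : z1 ∈ M := ⟨⟨hz1x, hz1nC1⟩, fun h => (hdisj' z1 h).2 rfl⟩
    have hz2M : z2 ∈ M := ⟨⟨hz2x, hz2nC1⟩, hz2nC2⟩
    have hMcl : ∀ r ∈ M \ {z2}, ∀ q, G.Adj r q → q ∈ H \ C1 → q ∈ (M \ {z2}) ∪ {z2} := by
      intro r hr q hrq hq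
      by_cases hqz2 : q = z2
      · exact Or.inr hqz2
      · refine Or.inl ⟨⟨hq, ?_⟩, hqz2⟩
        intro hqC2
        have hrz2 : r ≠ z2 := hr.2
        have : r ∈ C2 := comp_closed hqC2 hrq.symm (hmk hr.1.1.1 hrz2)
        exact hr.1.2 this
    have subsetM : (M \ {z2}) ∪ {z2} ⊆ M := by
      rintro q (hq | rfl)
      · exact hq.1
      · exact hz2M
    have hlink : ReachIn G M z1 z2 := by
      by_cases h12 : z1 = z2
      · exact h12 ▸ ReachIn.refl hz1M
      · obtain ⟨p, hp⟩ := (hK1 z2 hz2x hz2nC1).symm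
        have hstay := stay_lemma (C := M \ {z2}) (z := z2) (s := H \ C1) hMcl
          ⟨hz1M, h12⟩ p hp
        rcases hstay with h | h
        · exact h.mono subsetM
        · exact h.mono (fun q hq => hq.1)
    have hMreach : ∀ u ∈ M, ReachIn G M u z1 := by
      intro u hu
      by_cases huz2 : u = z2
      · exact huz2 ▸ hlink.symm
      · obtain ⟨p, hp⟩ := hK1 u hu.1.1 hu.1.2
        have hstay := stay_lemma (C := M \ {z2}) (z := z2) (s := H \ C1) hMcl ⟨hu, huz2⟩ p hp
        rcases hstay with h | h
        · exact (h.mono subsetM).trans hlink.symm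
        · exact h.mono (fun q hq => hq.1)
    -- the两 sides
    have hC1reach : ∀ u ∈ C1, u ≠ a → ReachIn G ((C1 \ {a}) ∪ {z1}) u z1 := by
      intro u hu hua
      have huH := hget (hC1H hu)
      obtain ⟨p, hp⟩ := hAnc a haC1 u (hmk huH.1 hua)
      have hstay := stay_lemma (C := C1 \ {a}) (z := z1) (s := H \ {a})
        (fun r hr q hrq hq => ?_) (⟨hu, by simp [hua]⟩ : u ∈ C1 \ {a}) p hp
      · rcases hstay with h | h
        · exact h
        · exact h.mono Set.subset_union_left
      · by_cases hqz1 : q = z1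
        · exact Or.inr hqz1
        · exact Or.inl ⟨comp_closed hr.1 hrq (hmk (hget hq).1 hqz1), by simp [(hget hq).2]⟩
    have hC2reach : ∀ u ∈ C2, u ≠ b → ReachIn G ((C2 \ {b}) ∪ {z2}) u z2 := by
      intro u hu hub
      have huH := hget (hC2H hu)
      obtain ⟨p, hp⟩ := hBnc b hbC2 u (hmk huH.1 hub)
      have hstay := stay_lemma (C := C2 \ {b}) (z := z2) (s := H \ {b})
        (fun r hr q hrq hq => ?_) (⟨hu, by simp [hub]⟩ : u ∈ C2 \ {b}) p hp
      · rcases hstay with h | h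
        · exact h
        · exact h.mono Set.subset_union_left
      · by_cases hqz2 : q = z2
        · exact Or.inr hqz2
        · exact Or.inl ⟨comp_closed hr.1 hrq (hmk (hget hq).1 hqz2), by simp [(hget hq).2]⟩
    -- target set
    set T : Set V := {p | p ≠ a ∧ p ≠ b} with hT
    have hMT : M ⊆ T := by
      rintro q ⟨⟨hq1, hq2⟩, hq3⟩
      exact ⟨fun h => hq2 (h ▸ haC1), fun h => hq3 (h ▸ hbC2)⟩
    have hC1T : (C1 \ {a}) ∪ {z1} ⊆ T := by
      rintro q (⟨hq, hqa⟩ | rfl)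
      · exact ⟨by simpa using hqa, fun h => hbnC1 (h ▸ hq)⟩
      · exact ⟨fun h => hz1nC1 (h ▸ haC1), fun h => hbz1 h.symm⟩
    have hC2T : (C2 \ {b}) ∪ {z2} ⊆ T := by
      rintro q (⟨hq, hqb⟩ | rfl)
      · exact ⟨fun h => hanC2 (h ▸ hq), by simpa using hqb⟩
      · exact ⟨fun h => hz2nC1 (h ▸ haC1), fun h => hz2nC2 (h ▸ hbC2)⟩
    have hallH : ∀ u, u ∈ T → u ≠ x → ReachIn G T u z1 := by
      intro u hu hux
      by_cases huC1 : u ∈ C1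
      · exact (hC1reach u huC1 hu.1).mono hC1T
      · by_cases huC2 : u ∈ C2
        · exact ((hC2reach u huC2 hu.2).mono hC2T).trans ((hlink.symm).mono hMT)
        · exact (hMreach u ⟨⟨hux, huC1⟩, huC2⟩).mono hMT
    have hxa' : x ≠ a := fun h => haH.1 h.symm
    have hxb' : x ≠ b := fun h => hbH.1 h.symm
    have hxT : x ∈ T := ⟨hxa', hxb'⟩
    have hall : ∀ u, u ∈ T → ReachIn G T u z1 := by
      intro u hu
      by_cases hux : u = x
      · subst hux
        obtain ⟨t0, ht0N, ht0ab⟩ : ∃ t0 ∈ G.neighborFinset u, t0 ≠ a ∧ t0 ≠ b := by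
          have h1 := Finset.le_card_sdiff ({a, b} : Finset V) (G.neighborFinset u)
          have h2 : ({a, b} : Finset V).card ≤ 2 := by
            apply le_trans (Finset.card_insert_le _ _)
            simp
          have h3 := hdeg3 u
          rw [← card_neighborFinset_eq_degree] at h3
          have hpos : 0 < ((G.neighborFinset u) \ ({a, b} : Finset V)).card := by omega
          obtain ⟨t0, ht0⟩ := Finset.card_pos.mp hpos
          rw [Finset.mem_sdiff] at ht0
          refine ⟨t0, ht0.1, ?_⟩
          have := ht0.2
          simp only [Finset.mem_insert, Finset.mem_singleton] at this
          push_neg at this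
          exact this
        rw [mem_neighborFinset] at ht0N
        have ht0T : t0 ∈ T := ⟨ht0ab.1, ht0ab.2⟩
        exact (reachIn_adj ht0N hu ht0T).trans (hallH t0 ht0T ht0N.ne')
      · exact hallH u hu hux
    refine ⟨x, a, b, hxa, hxb, hnab, habne, ?_⟩
    intro u t hua hub hta htb
    exact (hall u ⟨hua, hub⟩).trans (hall t ⟨hta, htb⟩).symm


end Triple


section TripleWrap

open Finset

variable {V : Type*} [Fintype V] {G : SimpleGraph V}

theorem colorable_of_triple [DecidableRel G.Adj] (k : ℕ) (hdeg : ∀ u, G.degree u ≤ k)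
    {v a b : V} (hva : G.Adj v a) (hvb : G.Adj v b) (hnab : ¬ G.Adj a b) (hab : a ≠ b)
    (hreach : ∀ u t : V, u ≠ a → u ≠ b → t ≠ a → t ≠ b →
      ReachIn G {p | p ≠ a ∧ p ≠ b} u t) : G.Colorable k := by
  classical
  set s : Set V := {p | p ≠ a ∧ p ≠ b} with hs
  have hva' : v ≠ a := hva.ne
  have hvb' : v ≠ b := hvb.ne
  have hvs : v ∈ s := ⟨hva', hvb'⟩
  have hk : 0 < k := by
    have h1 : 1 ≤ G.degree v := by
      rw [← card_neighborFinset_eq_degree]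
      exact Finset.card_pos.mpr ⟨a, (mem_neighborFinset G v a).mpr hva⟩
    exact lt_of_lt_of_le h1 (hdeg v)
  have hsconn : (G.induce s).Connected := by
    rw [connected_induce_iff]
    exact ⟨⟨v, hvs⟩, fun u hu t ht => hreach u t hu.1 hu.2 ht.1 ht.2⟩
  obtain ⟨ord0, hinj0, hord0⟩ := exists_good_ord hsconn ⟨v, hvs⟩
  set ordG : V → ℕ := fun p =>
    if h1 : p = a then 0 else if h2 : p = b then 1 else 2 + ord0 ⟨p, h1, h2⟩ with hordG
  have hordGa : ordG a = 0 := by rw [hordG]; simp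
  have hordGb : ordG b = 1 := by
    have hba : b ≠ a := Ne.symm hab
    simp [hordG, hba]
  have hordGs : ∀ (p : V) (h1 : p ≠ a) (h2 : p ≠ b), ordG p = 2 + ord0 ⟨p, h1, h2⟩ := by
    intro p h1 h2
    simp [hordG, h1, h2]
  set P : Finset V := {a, b} with hP
  have hmemP : ∀ p : V, p ∈ P ↔ (p = a ∨ p = b) := by
    intro p
    simp [hP]
  have hinj : Function.Injective ordG := by
    intro p q hpq
    by_cases hpa : p = a <;> by_cases hqa : q = a <;>
      by_cases hpb : p = b <;> by_cases hqb : q = b <;>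
        try (subst_vars; rfl)
    all_goals subst_vars
    all_goals first
      | rfl
      | (exfalso
         first
          | (rw [hordGa] at hpq)
          | skip
         first
          | (rw [hordGb] at hpq)
          | skip
         try rw [hordGs _ (by assumption) (by assumption)] at hpq
         omega)
      | skip
    -- remaining: both not in {a,b}
    · rw [hordGs p hpa hpb, hordGs q hqa hqb] at hpq
      have := hinj0 (by omega : ord0 ⟨p, hpa, hpb⟩ = ord0 ⟨q, hqa, hqb⟩)
      exact congrArg Subtype.val this
  have hPprop : ∀ p ∈ P, ∀ q ∈ P, G.Adj p q → (fun _ : V => (⟨0, hk⟩ : Fin k)) p ≠ (fun _ : V => (⟨0, hk⟩ : Fin k)) q := by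
    intro p hp q hq hadj
    exfalso
    rcases (hmemP p).mp hp with rfl | rfl <;> rcases (hmemP q).mp hq with rfl | rfl
    · exact hadj.ne rfl
    · exact hnab hadj
    · exact hnab hadj.symm
    · exact hadj.ne rfl
  have hseg : ∀ p ∈ P, ∀ q, q ∉ P → ordG p < ordG q := by
    intro p hp q hq
    have hq' : q ≠ a ∧ q ≠ b := by
      rw [hmemP] at hq
      push_neg at hq
      exact hq
    rw [hordGs q hq'.1 hq'.2]
    rcases (hmemP p).mp hp with rfl | rfl
    · rw [hordGa]; omega
    · rw [hordGb]; omega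
  have hvP : v ∉ P := by
    rw [hmemP]
    push_neg
    exact ⟨hva', hvb'⟩
  have hcount : ∀ q, q ∉ P → (earlier G ordG q).card < k ∨
      (∃ a' ∈ P, ∃ b' ∈ P, a' ∈ earlier G ordG q ∧ b' ∈ earlier G ordG q ∧ a' ≠ b' ∧
        (fun _ : V => (⟨0, hk⟩ : Fin k)) a' = (fun _ : V => (⟨0, hk⟩ : Fin k)) b' ∧
        (earlier G ordG q).card ≤ k) := by
    intro q hq
    have hq' : q ≠ a ∧ q ≠ b := by
      rw [hmemP] at hq
      push_neg at hq
      exact hq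
    by_cases hqv : q = v
    · subst hqv
      right
      have hqord := hordGs q hq'.1 hq'.2
      refine ⟨a, (hmemP a).mpr (Or.inl rfl), b, (hmemP b).mpr (Or.inr rfl), ?_, ?_, hab, rfl, ?_⟩
      · simp only [earlier, mem_filter, mem_neighborFinset]
        exact ⟨hva, by rw [hordGa, hqord]; omega⟩
      · simp only [earlier, mem_filter, mem_neighborFinset]
        exact ⟨hvb, by rw [hordGb, hqord]; omega⟩
      · calc (earlier G ordG q).card ≤ (G.neighborFinset q).card :=
            Finset.card_le_card (Finset.filter_subset _ _)
          _ ≤ k := by rw [card_neighborFinset_eq_degree]; exact hdeg q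
    · left
      have hqs : q ∈ s := ⟨hq'.1, hq'.2⟩
      have hqnv : (⟨q, hqs⟩ : ↥s) ≠ ⟨v, hvs⟩ := by
        intro h
        exact hqv (congrArg Subtype.val h)
      obtain ⟨w0, hw0adj, hw0lt⟩ := hord0 ⟨q, hqs⟩ hqnv
      have hw0G : G.Adj q (w0 : V) := hw0adj
      have hw0ord : ordG q < ordG (w0 : V) := by
        rw [hordGs q hq'.1 hq'.2, hordGs (w0 : V) w0.2.1 w0.2.2]
        have hw0eq : ord0 ⟨(w0 : V), w0.2.1, w0.2.2⟩ = ord0 w0 := by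
          congr 1
        rw [hw0eq]
        omega
      have hsub : earlier G ordG q ⊆ (G.neighborFinset q).erase (w0 : V) := by
        intro y hy
        simp only [earlier, mem_filter, mem_neighborFinset] at hy
        refine Finset.mem_erase.mpr ⟨?_, (mem_neighborFinset G q y).mpr hy.1⟩
        rintro rfl
        omega
      have h1 := Finset.card_le_card hsub
      have h2 : ((G.neighborFinset q).erase (w0 : V)).card = (G.neighborFinset q).card - 1 :=
        Finset.card_erase_of_mem ((mem_neighborFinset G q (w0 : V)).mpr hw0G)
      have h3 : 0 < (G.neighborFinset q).card :=
        Finset.card_pos.mpr ⟨(w0 : V), (mem_neighborFinset G q (w0 : V)).mpr hw0G⟩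
      have h4 : (G.neighborFinset q).card ≤ k := by
        rw [card_neighborFinset_eq_degree]; exact hdeg q
      omega
  refine ⟨Coloring.mk (greedy G k hk ordG P (fun _ => ⟨0, hk⟩)) ?_⟩
  intro u t hadj
  exact greedy_proper G k hk ordG P (fun _ => ⟨0, hk⟩) hinj hPprop hseg hcount u t hadj

end TripleWrap


section TwoRegular

lemma closed_walk_mem {V : Type*} {G : SimpleGraph V} {S : Set V}
    (hcl : ∀ p ∈ S, ∀ q, G.Adj p q → q ∈ S) {u w : V} (hu : u ∈ S) (p : G.Walk u w) :
    w ∈ S := by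
  induction p with
  | nil => exact hu
  | cons h q ih => exact ih (hcl _ hu _ h)

open Finset

variable {V : Type*} [Fintype V] {G : SimpleGraph V}

lemma cycle_colorable {n : ℕ} (he : Even n) : (SimpleGraph.cycleGraph n).Colorable 2 := by
  obtain ⟨t, rfl⟩ := he
  refine ⟨Coloring.mk (fun i => ⟨i.val % 2, by omega⟩) ?_⟩
  intro i j hadj
  rw [cycleGraph_adj'] at hadj
  have hkey : ∀ p q : Fin (t + t), (p - q).val = 1 → p.val = (1 + q.val) % (t + t) := by
    intro p q hpq
    haveI : NeZero (t + t) := ⟨Nat.pos_iff_ne_zero.mp i.pos⟩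
    have h1 : (p - q) + q = p := sub_add_cancel p q
    have h2 : ((p - q) + q).val = ((p - q).val + q.val) % (t + t) := Fin.val_add _ _
    rw [h1, hpq] at h2
    exact h2
  have hij : i.val ≠ j.val := by
    have hilt := i.isLt
    have hjlt := j.isLt
    rcases hadj with h | h
    · have := hkey i j h
      by_cases hc : 1 + j.val < t + t
      · rw [Nat.mod_eq_of_lt hc] at this
        omega
      · have hje : 1 + j.val = t + t := by omega
        rw [hje, Nat.mod_self] at this
        omega
    · have := hkey j i h
      by_cases hc : 1 + i.val < t + t
      · rw [Nat.mod_eq_of_lt hc] at this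
        omega
      · have hie : 1 + i.val = t + t := by omega
        rw [hie, Nat.mod_self] at this
        omega
  intro hcol
  rw [Fin.mk.injEq] at hcol
  -- i.val % 2 = j.val % 2, i.val ≠ j.val, and they differ by one mod t+t
  rcases hadj with h | h
  · have := hkey i j h
    have hjlt := j.isLt
    by_cases hc : 1 + j.val < t + t
    · rw [Nat.mod_eq_of_lt hc] at this
      omega
    · have hje : 1 + j.val = t + t := by omega
      rw [hje, Nat.mod_self] at this
      omega
  · have := hkey j i h
    have hilt := i.isLt
    by_cases hc : 1 + i.val < t + t
    · rw [Nat.mod_eq_of_lt hc] at this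
      omega
    · have hie : 1 + i.val = t + t := by omega
      rw [hie, Nat.mod_self] at this
      omega

lemma iso_of_seq {V : Type*} {G : SimpleGraph V} (n : ℕ) (hn : 3 ≤ n) (g : ℕ → V)
    (hgadj : ∀ m, G.Adj (g m) (g (m + 1)))
    (hmod : ∀ m, g m = g (m % n))
    (hinj : ∀ i j, i < n → j < n → g i = g j → i = j)
    (hN : ∀ m y, G.Adj (g m) y → y = g (m + n - 1) ∨ y = g (m + n + 1))
    (hsurj : ∀ u, ∃ m, u = g m) :
    Nonempty (G ≃g SimpleGraph.cycleGraph n) := by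
  obtain ⟨m2, rfl⟩ : ∃ m2, n = m2 + 2 := ⟨n - 2, by omega⟩
  set n := m2 + 2 with hndef
  have hnpos : 0 < n := by omega
  set e0 : Fin n → V := fun i => g i.val with he0
  have he0inj : Function.Injective e0 := by
    intro i j hij
    exact Fin.ext (hinj i.val j.val i.isLt j.isLt hij)
  have he0surj : Function.Surjective e0 := by
    intro u
    obtain ⟨m, hm⟩ := hsurj u
    exact ⟨⟨m % n, Nat.mod_lt m hnpos⟩, by rw [he0]; simp only; rw [← hmod m, hm]⟩
  have hcons : ∀ i j : Fin n, j + 1 = i → G.Adj (e0 j) (e0 i) := by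
    intro i j hji
    have hival : i.val = (j.val + 1) % n := by
      rw [← hji, Fin.val_add, Fin.val_one]
    have : e0 i = g (j.val + 1) := by
      rw [he0]
      simp only
      rw [hival, ← hmod (j.val + 1)]
    rw [this]
    exact hgadj j.val
  have hadj_iff : ∀ i j : Fin n, G.Adj (e0 i) (e0 j) ↔ (SimpleGraph.cycleGraph n).Adj i j := by
    intro i j
    rw [SimpleGraph.cycleGraph_adj]
    constructor
    · intro hadj
      have hij : i ≠ j := fun h => hadj.ne (congrArg e0 h)
      rcases hN i.val (e0 j) hadj with h | h
      · -- j = i - 1, i.e. j + 1 = i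
        have hjval : j.val = (i.val + n - 1) % n := by
          apply hinj j.val ((i.val + n - 1) % n) j.isLt (Nat.mod_lt _ hnpos)
          rw [← hmod (i.val + n - 1)]
          exact h
        have hji : j + 1 = i := by
          apply Fin.ext
          rw [Fin.val_add, Fin.val_one, hjval, Nat.mod_add_mod]
          have e1 : i.val + n - 1 + 1 = i.val + n := by omega
          rw [e1, Nat.add_mod_right]
          exact Nat.mod_eq_of_lt i.isLt
        left
        rw [← hji]
        abel
      · -- j = i + 1
        have hjval : j.val = (i.val + 1) % n := by
          apply hinj j.val ((i.val + 1) % n) j.isLt (Nat.mod_lt _ hnpos)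
          rw [← hmod (i.val + 1)]
          have e1 : i.val + n + 1 = i.val + 1 + n := by omega
          rw [e1] at h
          have hper' : g (i.val + 1 + n) = g (i.val + 1) := by
            rw [hmod (i.val + 1 + n), Nat.add_mod_right, ← hmod]
          exact h.trans hper' 
        have hij' : i + 1 = j := by
          apply Fin.ext
          rw [Fin.val_add, Fin.val_one, hjval]
        right
        rw [← hij']
        abel
    · intro hadj
      rcases hadj with h | h
      · -- i - j = 1: j + 1 = i
        have hji : j + 1 = i := by
          have h2 : j + (i - j) = j + 1 := by rw [h]
          rw [add_sub_cancel] at h2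
          exact h2.symm
        exact (hcons i j hji).symm
      · have hij' : i + 1 = j := by
          have h2 : i + (j - i) = i + 1 := by rw [h]
          rw [add_sub_cancel] at h2
          exact h2.symm
        exact hcons j i hij'
  have hbij : Function.Bijective e0 := ⟨he0inj, he0surj⟩
  have iso1 : SimpleGraph.cycleGraph n ≃g G :=
    ⟨Equiv.ofBijective e0 hbij, fun {a b} => hadj_iff a b⟩
  exact ⟨iso1.symm⟩

theorem twoRegular_cycle [DecidableRel G.Adj] [Nonempty V] (hconn : G.Connected)
    (hdeg2 : ∀ v, G.degree v = 2) :
    3 ≤ Fintype.card V ∧ Nonempty (G ≃g SimpleGraph.cycleGraph (Fintype.card V)) := by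
  classical
  obtain ⟨v0⟩ := ‹Nonempty V›
  -- v0 has a neighbor
  have hnb : ∀ c : V, ∃ y, G.Adj c y := by
    intro c
    have h2 : (G.neighborFinset c).card = 2 := by
      rw [card_neighborFinset_eq_degree]; exact hdeg2 c
    obtain ⟨y, hy⟩ := Finset.card_pos.mp (by omega : 0 < (G.neighborFinset c).card)
    exact ⟨y, (mem_neighborFinset G c y).mp hy⟩
  obtain ⟨x, hx⟩ := hnb v0
  -- "next vertex" function
  set nxt : V → V → V := fun p c =>
    if h : ((G.neighborFinset c).erase p).Nonempty then h.choose else p with hnxt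
  have nxt_spec : ∀ p c, G.Adj p c → G.Adj c (nxt p c) ∧ nxt p c ≠ p := by
    intro p c h
    have hcard : ((G.neighborFinset c).erase p).card = 1 := by
      rw [Finset.card_erase_of_mem ((mem_neighborFinset G c p).mpr h.symm),
        card_neighborFinset_eq_degree, hdeg2 c]
    have hne : ((G.neighborFinset c).erase p).Nonempty := Finset.card_pos.mp (by omega)
    have hmem := hne.choose_spec
    rw [Finset.mem_erase, mem_neighborFinset] at hmem
    rw [hnxt]
    simp only [dif_pos hne]
    exact ⟨hmem.2, hmem.1⟩
  have nxt_uniq : ∀ p c y, G.Adj p c → G.Adj c y → y ≠ p → y = nxt p c := by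
    intro p c y h hy hyp
    have hcard : ((G.neighborFinset c).erase p).card = 1 := by
      rw [Finset.card_erase_of_mem ((mem_neighborFinset G c p).mpr h.symm),
        card_neighborFinset_eq_degree, hdeg2 c]
    obtain ⟨w, hw⟩ := Finset.card_eq_one.mp hcard
    have hymem : y ∈ (G.neighborFinset c).erase p :=
      Finset.mem_erase.mpr ⟨hyp, (mem_neighborFinset G c y).mpr hy⟩
    have hnmem : nxt p c ∈ (G.neighborFinset c).erase p := by
      have hne : ((G.neighborFinset c).erase p).Nonempty := Finset.card_pos.mp (by omega)
      have hmem := hne.choose_spec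
      rw [hnxt]
      simp only [dif_pos hne]
      exact hmem
    rw [hw, Finset.mem_singleton] at hymem hnmem
    rw [hymem, hnmem]
  -- the walk sequence
  set F : ℕ → V × V := fun m => Nat.rec (v0, x) (fun _ pc => (pc.2, nxt pc.1 pc.2)) m with hF
  set g : ℕ → V := fun m => (F m).1 with hg
  have hF0 : F 0 = (v0, x) := rfl
  have hFs : ∀ m, F (m + 1) = ((F m).2, nxt (F m).1 (F m).2) := fun m => rfl
  have hFadj : ∀ m, G.Adj (F m).1 (F m).2 := by
    intro m
    induction m with
    | zero => exact hx
    | succ m ih =>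
      rw [hFs m]
      exact (nxt_spec _ _ ih).1
  have hg1 : ∀ m, g (m + 1) = (F m).2 := fun m => rfl
  have hgadj : ∀ m, G.Adj (g m) (g (m + 1)) := by
    intro m
    rw [hg1 m]
    exact hFadj m
  have hgne2 : ∀ m, g (m + 2) ≠ g m := by
    intro m
    rw [hg1 (m + 1), hFs m]
    exact (nxt_spec _ _ (hFadj m)).2
  have hN : ∀ m y, G.Adj (g (m + 1)) y → y = g m ∨ y = g (m + 2) := by
    intro m y hy
    by_cases hym : y = g m
    · exact Or.inl hym
    · right
      exact nxt_uniq (F m).1 (F m).2 y (hFadj m) hy hym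
  -- backward determinism
  have hB : ∀ m, F m = (nxt (F (m + 1)).2 (F (m + 1)).1, (F (m + 1)).1) := by
    intro m
    have hadj1 : G.Adj (g (m + 2)) (g (m + 1)) := (hgadj (m + 1)).symm
    have hadj2 : G.Adj (g (m + 1)) (g m) := (hgadj m).symm
    have huniq := nxt_uniq (g (m + 2)) (g (m + 1)) (g m) hadj1 hadj2 (Ne.symm (hgne2 m))
    exact Prod.ext huniq rfl
  have hcancel : ∀ m i j, F (i + m) = F (j + m) → F i = F j := by
    intro m
    induction m with
    | zero => intro i j h; simpa using h
    | succ m ih =>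
      intro i j h
      apply ih
      have h' : F ((i + m) + 1) = F ((j + m) + 1) := by
        have e1 : i + (m + 1) = (i + m) + 1 := by omega
        have e2 : j + (m + 1) = (j + m) + 1 := by omega
        rw [e1, e2] at h
        exact h
      rw [hB (i + m), hB (j + m), h']
  -- pure periodicity
  have hrep : ∃ p, 0 < p ∧ F p = F 0 := by
    obtain ⟨i, j, hij, hFij⟩ := Finite.exists_ne_map_eq_of_infinite F
    rcases Nat.lt_or_ge i j with h | h
    · refine ⟨j - i, by omega, hcancel i (j - i) 0 ?_⟩
      have e1 : (j - i) + i = j := by omega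
      have e2 : 0 + i = i := by omega
      rw [e1, e2]
      exact hFij.symm
    · have hij' : j < i := by omega
      refine ⟨i - j, by omega, hcancel j (i - j) 0 ?_⟩
      have e1 : (i - j) + j = i := by omega
      have e2 : 0 + j = j := by omega
      rw [e1, e2]
      exact hFij
  set P := Nat.find hrep with hPdef
  obtain ⟨hPpos, hFP⟩ : 0 < P ∧ F P = F 0 := Nat.find_spec hrep
  have hPmin : ∀ q, 0 < q → q < P → F q ≠ F 0 := by
    intro q hq hqP hFq
    exact Nat.find_min hrep hqP ⟨hq, hFq⟩
  have hper : ∀ m, F (m + P) = F m := by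
    intro m
    induction m with
    | zero => simpa using hFP
    | succ m ih =>
      have e1 : m + 1 + P = (m + P) + 1 := by omega
      rw [e1, hFs (m + P), ih, ← hFs m]
  have hgper : ∀ m, g (m + P) = g m := fun m => congrArg Prod.fst (hper m)
  have hgperk : ∀ k m, g (m + k * P) = g m := by
    intro k
    induction k with
    | zero => intro m; simp
    | succ k ih =>
      intro m
      have e1 : m + (k + 1) * P = (m + k * P) + P := by ring
      rw [e1, hgper, ih]
  have hgmod : ∀ m, g m = g (m % P) := by
    intro m
    conv_lhs => rw [← Nat.mod_add_div' m P]
    exact hgperk (m / P) (m % P)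
  -- P ≥ 3
  have hP3 : 3 ≤ P := by
    have hgP0 : g P = g 0 := congrArg Prod.fst hFP
    by_contra hP3
    interval_cases P
    · exact (hgadj 0).ne hgP0.symm
    · exact hgne2 0 hgP0
  -- injectivity of g on [0, P)
  have hFinj : ∀ i j, i < j → j < P → F i ≠ F j := by
    intro i j hij hjP hFij
    have h0 : F 0 = F (j - i) := by
      refine hcancel i 0 (j - i) ?_
      have e1 : 0 + i = i := by omega
      have e2 : (j - i) + i = j := by omega
      rw [e1, e2]
      exact hFij
    exact hPmin (j - i) (by omega) (by omega) h0.symm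
  have hgshiftN : ∀ m y, G.Adj (g m) y → y = g (m + P - 1) ∨ y = g (m + P + 1) := by
    intro m y hy
    have hm1 : g m = g ((m + P - 1) + 1) := by
      have e1 : (m + P - 1) + 1 = m + P := by omega
      rw [e1, hgper]
    rw [hm1] at hy
    rcases hN (m + P - 1) y hy with h | h
    · exact Or.inl h
    · right
      have e2 : (m + P - 1) + 2 = m + P + 1 := by omega
      rw [e2] at h
      exact h
  have hginj : ∀ i j, i < P → j < P → g i = g j → i = j := by
    intro i j hiP hjP hgij
    by_contra hne
    -- wlog i < j
    wlog hij : i < j generalizing i j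
    · exact this j i hjP hiP hgij.symm (Ne.symm hne) (by omega)
    -- neighbors of g j = g i
    have hadj1 : G.Adj (g i) (g (j + 1)) := by rw [hgij]; exact hgadj j
    rcases hgshiftN i (g (j + 1)) hadj1 with hcase | hcase
    · -- reversal case
      have hrev : ∀ m, m + 1 ≤ P → g (j + m) = g (i + P - m) ∧ g (j + m + 1) = g (i + P - m - 1) := by
        intro m
        induction m with
        | zero =>
          intro _
          constructor
          · have e1 : i + P - 0 = i + P := by omega
            have e2 : j + 0 = j := by omega
            rw [e1, e2, ← hgij, hgper i]
          · have e1 : j + 0 + 1 = j + 1 := by omega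
            have e2 : i + P - 0 - 1 = i + P - 1 := by omega
            rw [e1, e2]
            exact hcase
        | succ m ih =>
          intro hmP
          obtain ⟨h1, h2⟩ := ih (by omega)
          refine ⟨by
            have e1 : j + (m + 1) = j + m + 1 := by omega
            have e2 : i + P - (m + 1) = i + P - m - 1 := by omega
            rw [e1, e2]
            exact h2, ?_⟩
          -- next step
          have hadj2 : G.Adj (g (i + P - m - 1)) (g (j + m + 2)) := by
            rw [← h2]
            have e1 : j + m + 2 = (j + m + 1) + 1 := by omega
            rw [e1]
            exact hgadj (j + m + 1)
          have e3 : i + P - m - 1 = (i + P - m - 2) + 1 := by omega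
          rw [e3] at hadj2
          rcases hN (i + P - m - 2) (g (j + m + 2)) hadj2 with h | h
          · have e4 : j + (m + 1) + 1 = j + m + 2 := by omega
            have e5 : i + P - (m + 1) - 1 = i + P - m - 2 := by omega
            rw [e4, e5]
            exact h
          · exfalso
            have e6 : (i + P - m - 2) + 2 = i + P - m := by omega
            rw [e6] at h
            have e7 : j + m + 2 = (j + m) + 2 := by omega
            rw [e7] at h
            exact hgne2 (j + m) (h.trans h1.symm)
      -- derive contradiction from the reversal
      set d := P + i - j with hd
      have hd0 : 0 < d := by omega
      have hdP : d < P := by omega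
      rcases Nat.even_or_odd d with ⟨e, he⟩ | ⟨e, he⟩
      · -- d = e + e, e ≥ 1
        have he1 : 1 ≤ e := by omega
        have hcon := hrev (e + 1) (by omega)
        have h1 := (hrev (e - 1) (by omega)).2
        -- g (j + e) = g (i + P - e) and with e+1: g(j+e+1) = g(i+P-e-1)
        have hA := (hrev (e + 1) (by omega)).1
        -- j + (e+1), i + P - (e+1): note i + P - e - 1 = j + d - e - 1 = j + e - 1
        have eA : i + P - (e + 1) = j + e - 1 := by omega
        have eB : j + (e + 1) = (j + e - 1) + 2 := by omega
        rw [eA, eB] at hA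
        exact hgne2 (j + e - 1) hA
      · -- d = 2e + 1
        have hA := (hrev e (by omega)).1
        have eA : i + P - e = j + e + 1 := by omega
        rw [eA] at hA
        exact (hgadj (j + e)).ne hA
    · -- forward case: F i = F j, contradiction
      have e1 : i + P + 1 = (i + 1) + P := by omega
      rw [e1, hgper] at hcase
      apply hFinj i j hij hjP
      have hfst : (F i).1 = (F j).1 := hgij
      have hsnd : (F i).2 = (F j).2 := by
        rw [← hg1 i, ← hg1 j, ← hcase]
      exact Prod.ext hfst hsnd
  -- surjectivity
  have hsurj : ∀ u : V, ∃ m, u = g m := by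
    intro u
    obtain ⟨p⟩ := hconn.preconnected v0 u
    refine closed_walk_mem (S := {u : V | ∃ m, u = g m}) ?_ ⟨0, rfl⟩ p
    rintro r ⟨m, rfl⟩ q hq
    rcases hgshiftN m q hq with h | h
    · exact ⟨m + P - 1, h⟩
    · exact ⟨m + P + 1, h⟩
  -- the bijection Fin P ≃ V
  have hgltP : ∀ m, m % P < P := fun m => Nat.mod_lt m hPpos
  set e0 : Fin P → V := fun i => g i.val with he0
  have he0inj : Function.Injective e0 := by
    intro i j hij
    exact Fin.ext (hginj i.val j.val i.isLt j.isLt hij)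
  have he0surj : Function.Surjective e0 := by
    intro u
    obtain ⟨m, hm⟩ := hsurj u
    exact ⟨⟨m % P, hgltP m⟩, by rw [he0]; simp only; rw [← hgmod m, hm]⟩
  have he0bij : Function.Bijective e0 := ⟨he0inj, he0surj⟩
  have hcard : Fintype.card V = P := by
    rw [← Fintype.card_fin P]
    exact (Fintype.card_of_bijective he0bij).symm
  have hiso := iso_of_seq P hP3 g hgadj hgmod hginj hgshiftN hsurj
  constructor
  · omega
  · rw [hcard]
    exact hiso

end TwoRegular

end BrooksProof

/-- **Brooks' theorem.** If a finite simple graph `G` is connected, not complete,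
and not (isomorphic to) an odd cycle, then its chromatic number is at most its
maximum degree. -/
theorem brooks {V : Type*} [Fintype V] (G : SimpleGraph V) [DecidableRel G.Adj]
    (hconn : G.Connected) (hnc : G ≠ ⊤)
    (hnodd : ¬ ∃ n : ℕ, Odd n ∧ Nonempty (G ≃g SimpleGraph.cycleGraph n)) :
    G.chromaticNumber ≤ G.maxDegree := by
  classical
  open SimpleGraph BrooksProof in
  by_cases hV : Nonempty V
  · set k := G.maxDegree with hkdef
    suffices hcol : G.Colorable k by exact hcol.chromaticNumber_le
    have hdeg : ∀ v, G.degree v ≤ k := fun v => G.degree_le_maxDegree v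
    have hpair : ∃ x y : V, x ≠ y ∧ ¬ G.Adj x y := by
      by_contra h
      push_neg at h
      apply hnc
      ext u v
      simp only [SimpleGraph.top_adj]
      exact ⟨fun hadj => hadj.ne, fun hne => h u v hne⟩
    by_cases hreg : ∃ r, G.degree r < k
    · obtain ⟨r, hr⟩ := hreg
      exact colorable_of_exists_lt_degree G hconn k hdeg r hr
    · push_neg at hreg
      have hregeq : ∀ v, G.degree v = k := fun v => le_antisymm (hdeg v) (hreg v)
      have hk0 : k ≠ 0 := by
        intro h0
        apply hnc
        have hsub : ∀ u v : V, u = v := by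
          intro u v
          obtain ⟨p⟩ := hconn.preconnected u v
          cases p with
          | nil => rfl
          | cons h q =>
            exfalso
            have hpos : 0 < G.degree u := by
              rw [← SimpleGraph.card_neighborFinset_eq_degree]
              exact Finset.card_pos.mpr ⟨_, (SimpleGraph.mem_neighborFinset G u _).mpr h⟩
            rw [hregeq u, h0] at hpos
            omega
        ext u v
        simp only [SimpleGraph.top_adj]
        exact ⟨fun hadj => hadj.ne, fun hne => absurd (hsub u v) hne⟩
      have hk1 : k ≠ 1 := by
        intro h1
        apply hnc
        obtain ⟨v0⟩ := hV
        have hc1 : (G.neighborFinset v0).card = 1 := by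
          rw [SimpleGraph.card_neighborFinset_eq_degree, hregeq, h1]
        obtain ⟨w0, hw0⟩ := Finset.card_eq_one.mp hc1
        have hadj0 : G.Adj v0 w0 := by
          have : w0 ∈ G.neighborFinset v0 := by rw [hw0]; exact Finset.mem_singleton_self w0
          exact (SimpleGraph.mem_neighborFinset G v0 w0).mp this
        have hc2 : (G.neighborFinset w0).card = 1 := by
          rw [SimpleGraph.card_neighborFinset_eq_degree, hregeq, h1]
        obtain ⟨z0, hz0⟩ := Finset.card_eq_one.mp hc2
        have hz0v0 : z0 = v0 := by
          have : v0 ∈ G.neighborFinset w0 :=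
            (SimpleGraph.mem_neighborFinset G w0 v0).mpr hadj0.symm
          rw [hz0, Finset.mem_singleton] at this
          exact this.symm
        have hcl : ∀ p ∈ ({v0, w0} : Set V), ∀ q, G.Adj p q → q ∈ ({v0, w0} : Set V) := by
          rintro p (rfl | rfl) q hq
          · have : q ∈ G.neighborFinset p := (SimpleGraph.mem_neighborFinset G p q).mpr hq
            rw [hw0, Finset.mem_singleton] at this
            exact Or.inr this
          · have : q ∈ G.neighborFinset p := (SimpleGraph.mem_neighborFinset G p q).mpr hq
            rw [hz0, Finset.mem_singleton] at this
            rw [this, hz0v0]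
            exact Or.inl rfl
        have hall : ∀ u : V, u ∈ ({v0, w0} : Set V) := by
          intro u
          obtain ⟨p⟩ := hconn.preconnected v0 u
          exact closed_walk_mem hcl (Or.inl rfl) p
        ext u v
        simp only [SimpleGraph.top_adj]
        refine ⟨fun hadj => hadj.ne, fun hne => ?_⟩
        rcases hall u with rfl | rfl <;> rcases hall v with rfl | rfl
        · exact absurd rfl hne
        · exact hadj0
        · exact hadj0.symm
        · exact absurd rfl hne
      by_cases hk2 : k = 2
      · obtain ⟨h3card, ⟨iso⟩⟩ := twoRegular_cycle hconn (fun v => by rw [hregeq v, hk2])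
        rcases Nat.even_or_odd (Fintype.card V) with he | ho
        · have hcol2 := cycle_colorable he
          have hcol2' : G.Colorable 2 :=
            SimpleGraph.Colorable.of_hom iso.toEmbedding.toHom hcol2
          rw [hk2]
          exact hcol2'
        · exact absurd ⟨_, ho, ⟨iso⟩⟩ hnodd
      · have hk3 : 3 ≤ k := by omega
        obtain ⟨x, y, hxy, hnadj⟩ := hpair
        by_cases hcut : ∀ w u t : V, u ≠ w → t ≠ w → ReachIn G {z | z ≠ w} u t
        · obtain ⟨v, a, b, hva, hvb, hnab, hab, hreach⟩ :=
            exists_triple hconn (fun v => by rw [hregeq v]; omega) hxy hnadj hcut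
          exact colorable_of_triple k hdeg hva hvb hnab hab hreach
        · push_neg at hcut
          obtain ⟨w, u, t, hu, ht, hnr⟩ := hcut
          exact colorable_of_cutvertex hconn k hdeg w hu ht hnr
  · have hempty : IsEmpty V := not_nonempty_iff.mp hV
    rw [SimpleGraph.chromaticNumber_eq_zero_of_isEmpty]
    exact zero_le
end

section
/- For any finite simple graph G with vertices v_1,...,v_n ordered so that deg(v_1) ≥ deg(v_2) ≥ ... ≥ deg(v_n), there exists a proper vertex coloring of G using at most max_{1≤i≤n} min(deg(v_i)+1, i) colors; consequently χ(G) ≤ max_{1≤i≤n} min(deg(v_i)+1, i). -/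
def greedyCol (A : ℕ → ℕ → Bool) (i : ℕ) : ℕ :=
  Nat.find (p := fun c => ∀ j : Fin i, A j.1 i = true → greedyCol A j.1 ≠ c)
    ⟨((Finset.univ : Finset (Fin i)).sup fun j => greedyCol A j.1) + 1,
      fun j _ =>
        Nat.ne_of_lt (Nat.lt_succ_of_le
          (Finset.le_sup (f := fun j : Fin i => greedyCol A j.1) (Finset.mem_univ j)))⟩
decreasing_by all_goals omega

lemma greedyCol_ex (A : ℕ → ℕ → Bool) (i : ℕ) :
    ∃ c, ∀ j : Fin i, A j.1 i = true → greedyCol A j.1 ≠ c :=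
  ⟨((Finset.univ : Finset (Fin i)).sup fun j => greedyCol A j.1) + 1,
      fun j _ =>
        Nat.ne_of_lt (Nat.lt_succ_of_le
          (Finset.le_sup (f := fun j : Fin i => greedyCol A j.1) (Finset.mem_univ j)))⟩

lemma greedyCol_eq (A : ℕ → ℕ → Bool) (i : ℕ) :
    greedyCol A i = Nat.find (greedyCol_ex A i) := by
  rw [greedyCol]

lemma greedyCol_spec (A : ℕ → ℕ → Bool) (i j : ℕ) (hj : j < i) (hA : A j i = true) :
    greedyCol A j ≠ greedyCol A i := by
  rw [greedyCol_eq A i]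
  exact Nat.find_spec (greedyCol_ex A i) ⟨j, hj⟩ hA

lemma greedyCol_le (A : ℕ → ℕ → Bool) (i : ℕ) :
    greedyCol A i ≤ (((Finset.range i).filter fun j => A j i = true).image (greedyCol A)).card := by
  set T := ((Finset.range i).filter fun j => A j i = true).image (greedyCol A) with hT
  obtain ⟨c, hc1, hc2⟩ : ∃ c ∈ Finset.range (T.card + 1), c ∉ T := by
    by_contra h
    push_neg at h
    have hsub : Finset.range (T.card + 1) ⊆ T := fun c hc => h c hc
    have := Finset.card_le_card hsub
    simp at this
  have hp : ∀ j : Fin i, A j.1 i = true → greedyCol A j.1 ≠ c := by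
    intro j hA heq
    exact hc2 (heq ▸ Finset.mem_image_of_mem _ (Finset.mem_filter.mpr ⟨Finset.mem_range.mpr j.isLt, hA⟩))
  calc greedyCol A i ≤ c := by rw [greedyCol_eq A i]; exact Nat.find_le hp
    _ ≤ T.card := Nat.lt_succ_iff.mp (Finset.mem_range.mp hc1)



/-- **Welsh–Powell bound.** If the vertices `v 0, v 1, ..., v (n-1)` of a finite
simple graph are listed in non-increasing order of degree, then `G` has a proper
coloring with at most `max_i min (deg (v i) + 1) (i + 1)` colors, and hence the
chromatic number is bounded by this quantity. -/
theorem welsh_powell {V : Type*} [Fintype V] (G : SimpleGraph V) [DecidableRel G.Adj]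
    (n : ℕ) (v : Fin n ≃ V)
    (hsorted : ∀ i j : Fin n, i ≤ j → G.degree (v j) ≤ G.degree (v i)) :
    G.Colorable (Finset.univ.sup fun i : Fin n => min (G.degree (v i) + 1) (i.1 + 1)) ∧
      G.chromaticNumber ≤
        (Finset.univ.sup fun i : Fin n => min (G.degree (v i) + 1) (i.1 + 1)) := by
  set K := Finset.univ.sup fun i : Fin n => min (G.degree (v i) + 1) (i.1 + 1) with hK
  set A : ℕ → ℕ → Bool := fun j i =>
    if hj : j < n then if hi : i < n then decide (G.Adj (v ⟨j, hj⟩) (v ⟨i, hi⟩)) else false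
    else false with hA
  have hAiff : ∀ (j i : ℕ) (hj : j < n) (hi : i < n),
      A j i = true ↔ G.Adj (v ⟨j, hj⟩) (v ⟨i, hi⟩) := by
    intro j i hj hi
    simp [hA, hj, hi]
  have hAn : ∀ j i : ℕ, A j i = true → j < n := by
    intro j i h
    by_contra hj
    simp [hA, hj] at h
  -- color bound
  have hbound : ∀ i : Fin n, greedyCol A i.1 < K := by
    intro i
    have h1 : greedyCol A i.1 ≤
        (((Finset.range i.1).filter fun j => A j i.1 = true).image (greedyCol A)).card :=
      greedyCol_le A i.1
    have h2 : (((Finset.range i.1).filter fun j => A j i.1 = true).image (greedyCol A)).card ≤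
        ((Finset.range i.1).filter fun j => A j i.1 = true).card := Finset.card_image_le
    have h3 : ((Finset.range i.1).filter fun j => A j i.1 = true).card ≤ i.1 := by
      calc _ ≤ (Finset.range i.1).card := Finset.card_filter_le _ _
        _ = i.1 := Finset.card_range _
    have h4 : ((Finset.range i.1).filter fun j => A j i.1 = true).card ≤ G.degree (v i) := by
      rw [← SimpleGraph.card_neighborFinset_eq_degree]
      apply Finset.card_le_card_of_injOn (fun j => if hj : j < n then v ⟨j, hj⟩ else v i)
      · intro j hj
        rw [Finset.mem_coe, Finset.mem_filter] at hj
        have hjn := hAn j i.1 hj.2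
        have hadj := (hAiff j i.1 hjn i.isLt).mp hj.2
        simp only [hjn, dif_pos]
        rw [Finset.mem_coe, SimpleGraph.mem_neighborFinset]
        exact hadj.symm
      · intro a ha b hb hab
        rw [Finset.mem_coe, Finset.mem_filter] at ha hb
        have han := hAn a i.1 ha.2
        have hbn := hAn b i.1 hb.2
        simp only [han, hbn, dif_pos] at hab
        simpa using congrArg (fun x => (v.symm x).1) hab
    have h5 : min (G.degree (v i) + 1) (i.1 + 1) ≤ K := by
      rw [hK]
      exact Finset.le_sup (f := fun i : Fin n => min (G.degree (v i) + 1) (i.1 + 1))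
        (Finset.mem_univ i)
    omega
  have hKpos : ∀ w : V, greedyCol A (v.symm w).1 < K := fun w => by
    simpa using hbound (v.symm w)
  -- the coloring
  have hcol : G.Colorable K := by
    apply SimpleGraph.Colorable.mono_left le_rfl
    refine ⟨SimpleGraph.Coloring.mk (fun w => (⟨greedyCol A (v.symm w).1, hKpos w⟩ : Fin K)) ?_⟩
    intro w w' hadj
    set i := v.symm w with hi
    set j := v.symm w' with hj
    have hwi : v i = w := v.apply_symm_apply w
    have hwj : v j = w' := v.apply_symm_apply w'
    have hij : i ≠ j := fun h => G.ne_of_adj hadj (by rw [← hwi, ← hwj, h])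
    simp only [ne_eq, Fin.mk.injEq]
    rcases lt_or_gt_of_ne (fun h : i.1 = j.1 => hij (Fin.ext h)) with h | h
    · exact greedyCol_spec A j.1 i.1 h
        ((hAiff i.1 j.1 i.isLt j.isLt).mpr (by simpa [hwi, hwj] using hadj))
    · exact (greedyCol_spec A i.1 j.1 h
        ((hAiff j.1 i.1 j.isLt i.isLt).mpr (by simpa [hwi, hwj] using hadj.symm))).symm
  exact ⟨hcol, hcol.chromaticNumber_le⟩
end
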